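/- Under the Weierstrass decomposition hypothesis, suppose there exists a constant c ∈ (0, ∞) such that ‖J^k‖ ≤ c for all k ≥ 0 (operator norm). Then every equilibrium state Y_* is stable in the sense of Lyapunov for the optimal solutions: for every ε > 0 there exists δ > 0 such that whenever Y_0 ∈ ℂ^m satisfies ‖Y_0 − Y_*‖ ≤ δ, the optimal solution Ŷ_k = Q_p J^k (Q_p^*Q_p)^{-1} Q_p^* Y_0 satisfies ‖Ŷ_k − Y_*‖ ≤ ε for all k ≥ 0. -/

import Mathlib

open Matrix Filter Topology

noncomputable section

/-- Euclidean (ℓ²) norm on ℂ-vectors indexed by a finite type. -/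
def euclNorm {n : Type*} [Fintype n] (v : n → ℂ) : ℝ :=
  ‖(WithLp.equiv 2 (n → ℂ)).symm v‖

/-- Operator norm of a matrix, induced by the Euclidean norms. -/
def matOpNorm {α β : Type*} [Fintype α] [Fintype β] [DecidableEq β]
    (A : Matrix α β ℂ) : ℝ :=
  ‖LinearMap.toContinuousLinearMap (Matrix.toEuclideanLin A)‖

lemma euclNorm_nonneg {n : Type*} [Fintype n] (v : n → ℂ) : 0 ≤ euclNorm v :=
  norm_nonneg _

lemma matOpNorm_nonneg {α β : Type*} [Fintype α] [Fintype β] [DecidableEq β]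
    (A : Matrix α β ℂ) : 0 ≤ matOpNorm A := norm_nonneg _

lemma euclNorm_mulVec_le {α β : Type*} [Fintype α] [Fintype β] [DecidableEq β]
    (A : Matrix α β ℂ) (v : β → ℂ) :
    euclNorm (A.mulVec v) ≤ matOpNorm A * euclNorm v := by
  have h := (LinearMap.toContinuousLinearMap (Matrix.toEuclideanLin A)).le_opNorm
    ((WithLp.equiv 2 (β → ℂ)).symm v)
  simpa [euclNorm, matOpNorm, Matrix.toEuclideanLin_toLp] using h

theorem lyapunov_stable_of_bounded_powers (p q : ℕ) (hp : 1 ≤ p)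
    (F G P Q : Matrix (Fin p ⊕ Fin q) (Fin p ⊕ Fin q) ℂ)
    (J : Matrix (Fin p) (Fin p) ℂ) (H : Matrix (Fin q) (Fin q) ℂ)
    (hP : IsUnit P) (hQ : IsUnit Q) (hH : IsNilpotent H)
    (hF : P * F * Q = Matrix.fromBlocks 1 0 0 H)
    (hG : P * G * Q = Matrix.fromBlocks J 0 0 1)
    (Qp : Matrix (Fin p ⊕ Fin q) (Fin p) ℂ)
    (hQp : Qp = Q.submatrix id Sum.inl)
    (hbdd : ∃ c : ℝ, 0 < c ∧ ∀ k : ℕ, matOpNorm (J ^ k) ≤ c)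
    (Ystar : (Fin p ⊕ Fin q) → ℂ) (hFG : (F - G).mulVec Ystar = 0)
    (hmem : Ystar ∈ Submodule.span ℂ (Set.range Qpᵀ)) :
    ∀ ε > (0 : ℝ), ∃ δ > (0 : ℝ), ∀ Y0 : (Fin p ⊕ Fin q) → ℂ,
      euclNorm (Y0 - Ystar) ≤ δ →
        ∀ k : ℕ,
          euclNorm (Qp.mulVec ((J ^ k).mulVec (((Qpᴴ * Qp)⁻¹ * Qpᴴ).mulVec Y0)) - Ystar)
            ≤ ε := by
  obtain ⟨c, hc, hck⟩ := hbdd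
  -- Qp.mulVec w = Q.mulVec (Sum.elim w 0)
  have hQpVec : ∀ w : Fin p → ℂ, Qp.mulVec w = Q.mulVec (Sum.elim w 0) := by
    intro w
    funext i
    simp [hQp, Matrix.mulVec, dotProduct, Fintype.sum_sum_type, Matrix.submatrix]
  -- Qp.mulVec is injective
  have hQpInj : Function.Injective Qp.mulVec := by
    intro a b hab
    rw [hQpVec a, hQpVec b] at hab
    have := (Matrix.mulVec_injective_iff_isUnit.mpr hQ) hab
    funext i
    exact congrFun this (Sum.inl i)
  -- Gram matrix is a unit
  have hGram : IsUnit (Qpᴴ * Qp) := by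
    rw [← Matrix.mulVec_injective_iff_isUnit]
    have key : ∀ v : Fin p → ℂ, (Qpᴴ * Qp).mulVec v = 0 → v = 0 := by
      intro v hv
      have h1 : star v ⬝ᵥ (Qpᴴ * Qp).mulVec v = 0 := by rw [hv]; simp
      rw [← Matrix.mulVec_mulVec, Matrix.dotProduct_mulVec, ← Matrix.star_mulVec] at h1
      have h2 : Qp.mulVec v = 0 := by
        set u := Qp.mulVec v with hu
        have h3 : ∑ i, Complex.normSq (u i) = 0 := by
          have h4 := congrArg Complex.re h1
          simpa [dotProduct, Complex.add_re, Complex.mul_re, Complex.normSq_apply,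
            mul_comm] using h4
        funext i
        have h5 : Complex.normSq (u i) = 0 := by
          have hnn : ∀ j ∈ Finset.univ, 0 ≤ Complex.normSq (u j) := fun j _ => Complex.normSq_nonneg _
          exact (Finset.sum_eq_zero_iff_of_nonneg hnn).mp h3 i (Finset.mem_univ i)
        exact Complex.normSq_eq_zero.mp h5
      apply hQpInj
      simpa using h2
    intro a b hab
    have h6 : (Qpᴴ * Qp).mulVec (a - b) = 0 := by
      rw [Matrix.mulVec_sub, hab, sub_self]
    exact sub_eq_zero.mp (key _ h6)
  have hGramInv : (Qpᴴ * Qp)⁻¹ * (Qpᴴ * Qp) = 1 :=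
    Matrix.nonsing_inv_mul _ ((Matrix.isUnit_iff_isUnit_det _).mp hGram)
  -- Ystar = Qp.mulVec w
  have hmem' : Ystar ∈ LinearMap.range Qp.mulVecLin := by
    rw [Matrix.range_mulVecLin]; exact hmem
  obtain ⟨w, hw⟩ := hmem'
  simp only [Matrix.mulVecLin_apply] at hw
  -- J.mulVec w = w
  have hJw : J.mulVec w = w := by
    have h0 : F.mulVec Ystar = G.mulVec Ystar := by
      have := hFG
      rw [Matrix.sub_mulVec, sub_eq_zero] at this
      exact this
    have hz : (Matrix.fromBlocks 1 0 0 H : Matrix (Fin p ⊕ Fin q) (Fin p ⊕ Fin q) ℂ).mulVec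
          (Sum.elim w 0)
        = (Matrix.fromBlocks J 0 0 1 : Matrix (Fin p ⊕ Fin q) (Fin p ⊕ Fin q) ℂ).mulVec
          (Sum.elim w 0) := by
      have e1 : ∀ (A B : Matrix (Fin p ⊕ Fin q) (Fin p ⊕ Fin q) ℂ) (v : (Fin p ⊕ Fin q) → ℂ),
          (A * B).mulVec v = A.mulVec (B.mulVec v) :=
        fun A B v => (Matrix.mulVec_mulVec v A B).symm
      rw [← hF, ← hG, e1 (P * F) Q, e1 (P * G) Q, ← hQpVec, hw, e1 P F, e1 P G, h0]
    rw [Matrix.fromBlocks_mulVec, Matrix.fromBlocks_mulVec] at hz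
    have := congrFun hz
    have hl : (1 : Matrix (Fin p) (Fin p) ℂ).mulVec w + (0 : Matrix (Fin p) (Fin q) ℂ).mulVec 0
        = J.mulVec w + (0 : Matrix (Fin p) (Fin q) ℂ).mulVec 0 := by
      funext i
      exact this (Sum.inl i)
    simpa using hl.symm
  have hJkw : ∀ k : ℕ, (J ^ k).mulVec w = w := by
    intro k
    induction k with
    | zero => simp
    | succ n ih =>
      rw [pow_succ', ← Matrix.mulVec_mulVec, ih, hJw]
  -- the projection fixes Ystar at every step
  have hfix : ∀ k : ℕ,
      Qp.mulVec ((J ^ k).mulVec (((Qpᴴ * Qp)⁻¹ * Qpᴴ).mulVec Ystar)) = Ystar := by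
    intro k
    have h1 : ((Qpᴴ * Qp)⁻¹ * Qpᴴ).mulVec (Qp.mulVec w) = w := by
      rw [Matrix.mulVec_mulVec, Matrix.mul_assoc, hGramInv, Matrix.one_mulVec]
    conv_lhs => rw [← hw]
    rw [h1, hJkw k, hw]
  -- constants
  set C1 := matOpNorm Qp with hC1
  set C2 := matOpNorm ((Qpᴴ * Qp)⁻¹ * Qpᴴ) with hC2
  have hC1n : 0 ≤ C1 := matOpNorm_nonneg _
  have hC2n : 0 ≤ C2 := matOpNorm_nonneg _
  have hdpos : 0 < C1 * c * C2 + 1 := by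
    have : 0 ≤ C1 * c * C2 := mul_nonneg (mul_nonneg hC1n hc.le) hC2n
    linarith
  intro ε hε
  refine ⟨ε / (C1 * c * C2 + 1), div_pos hε hdpos, ?_⟩
  intro Y0 hY0 k
  have hdiff : Qp.mulVec ((J ^ k).mulVec (((Qpᴴ * Qp)⁻¹ * Qpᴴ).mulVec Y0)) - Ystar
      = Qp.mulVec ((J ^ k).mulVec (((Qpᴴ * Qp)⁻¹ * Qpᴴ).mulVec (Y0 - Ystar))) := by
    conv_lhs => rw [← hfix k]
    rw [Matrix.mulVec_sub, Matrix.mulVec_sub, Matrix.mulVec_sub]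
  rw [hdiff]
  have b1 := euclNorm_mulVec_le Qp ((J ^ k).mulVec (((Qpᴴ * Qp)⁻¹ * Qpᴴ).mulVec (Y0 - Ystar)))
  have b2 := euclNorm_mulVec_le (J ^ k) (((Qpᴴ * Qp)⁻¹ * Qpᴴ).mulVec (Y0 - Ystar))
  have b3 := euclNorm_mulVec_le ((Qpᴴ * Qp)⁻¹ * Qpᴴ) (Y0 - Ystar)
  have hvn : 0 ≤ euclNorm (Y0 - Ystar) := euclNorm_nonneg _
  have hckn := hck k
  have hJkn : 0 ≤ matOpNorm (J ^ k) := matOpNorm_nonneg _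
  have chain : euclNorm (Qp.mulVec ((J ^ k).mulVec (((Qpᴴ * Qp)⁻¹ * Qpᴴ).mulVec (Y0 - Ystar))))
      ≤ C1 * c * C2 * euclNorm (Y0 - Ystar) := by
    calc euclNorm (Qp.mulVec ((J ^ k).mulVec (((Qpᴴ * Qp)⁻¹ * Qpᴴ).mulVec (Y0 - Ystar))))
        ≤ C1 * euclNorm ((J ^ k).mulVec (((Qpᴴ * Qp)⁻¹ * Qpᴴ).mulVec (Y0 - Ystar))) := b1
      _ ≤ C1 * (matOpNorm (J ^ k) * euclNorm (((Qpᴴ * Qp)⁻¹ * Qpᴴ).mulVec (Y0 - Ystar))) :=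
          mul_le_mul_of_nonneg_left b2 hC1n
      _ ≤ C1 * (c * (C2 * euclNorm (Y0 - Ystar))) := by
          apply mul_le_mul_of_nonneg_left _ hC1n
          exact mul_le_mul hckn b3 (euclNorm_nonneg _) hc.le
      _ = C1 * c * C2 * euclNorm (Y0 - Ystar) := by ring
  have hstep : C1 * c * C2 * euclNorm (Y0 - Ystar)
      ≤ (C1 * c * C2) * (ε / (C1 * c * C2 + 1)) :=
    mul_le_mul_of_nonneg_left hY0 (by positivity)
  refine chain.trans (hstep.trans ?_)
  rw [div_eq_mul_inv, ← mul_assoc, mul_comm (C1 * c * C2) ε, mul_assoc]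
  have h1 : (C1 * c * C2) * (C1 * c * C2 + 1)⁻¹ ≤ 1 := by
    rw [mul_inv_le_iff₀ hdpos]
    linarith
  nlinarith [hε]
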